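/- arXiv:2204.01250 — 2 statements merged into one kernel-verified Lean document; each statement's English description precedes it below -/
import Mathlib

section
/- Let B be an invertible, totally positive n×n real matrix. Then for every index i one has B(i,i) > 0 and B^{−1}(i,i) ≥ 1/B(i,i). -/
set_option maxRecDepth 10000
set_option maxHeartbeats 1000000


open Matrix

/-- A matrix (over a linearly ordered index type) is totally positive if every minor,
obtained by selecting strictly increasing sequences of rows and columns, is nonnegative. -/
def TotallyPos {ι : Type*} [LinearOrder ι] (B : Matrix ι ι ℝ) : Prop :=
  ∀ (p : ℕ) (f g : Fin p → ι), StrictMono f → StrictMono g →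
    0 ≤ (B.submatrix f g).det

namespace TPaux

lemma strictMono_fin_one {α : Type*} [Preorder α] (f : Fin 1 → α) : StrictMono f :=
  fun a b h => absurd (Subsingleton.elim a b ▸ h) (lt_irrefl _)

lemma tp_submatrix {n k : ℕ} {A : Matrix (Fin n) (Fin n) ℝ} (hA : TotallyPos A)
    {f g : Fin k → Fin n} (hf : StrictMono f) (hg : StrictMono g) :
    TotallyPos (A.submatrix f g) := by
  intro p f' g' hf' hg'
  rw [Matrix.submatrix_submatrix]
  exact hA p _ _ (hf.comp hf') (hg.comp hg')

lemma tp_det_nonneg {n : ℕ} {A : Matrix (Fin n) (Fin n) ℝ} (hA : TotallyPos A) : 0 ≤ A.det := by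
  have := hA n id id strictMono_id strictMono_id
  rwa [Matrix.submatrix_id_id] at this

lemma tp_entry_nonneg {n : ℕ} {A : Matrix (Fin n) (Fin n) ℝ} (hA : TotallyPos A) (i j : Fin n) :
    0 ≤ A i j := by
  have := hA 1 (fun _ => i) (fun _ => j) (strictMono_fin_one _) (strictMono_fin_one _)
  rwa [Matrix.det_fin_one, Matrix.submatrix_apply] at this

lemma tp_rev {n : ℕ} {A : Matrix (Fin n) (Fin n) ℝ} (hA : TotallyPos A) :
    TotallyPos (A.submatrix Fin.rev Fin.rev) := by
  intro p f g hf hg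
  rw [Matrix.submatrix_submatrix]
  rw [← Matrix.det_submatrix_equiv_self (Fin.revPerm (n := p))]
  rw [Matrix.submatrix_submatrix]
  refine hA p _ _ ?_ ?_
  · intro a b h
    have : f (Fin.rev b) < f (Fin.rev a) := hf (Fin.rev_lt_rev.mpr h)
    simpa [Function.comp] using Fin.rev_lt_rev.mpr this
  · intro a b h
    have : g (Fin.rev b) < g (Fin.rev a) := hg (Fin.rev_lt_rev.mpr h)
    simpa [Function.comp] using Fin.rev_lt_rev.mpr this

section Schur

variable {k j : ℕ}

/-- extension of a selection of trailing indices by the full leading block -/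
def ext (f : Fin p → Fin j) : Fin (k + p) → Fin (k + j) := fun x =>
  finSumFinEquiv (Sum.map id f (finSumFinEquiv.symm x))

lemma ext_castAdd {p : ℕ} (f : Fin p → Fin j) (a : Fin k) :
    ext f (Fin.castAdd p a) = Fin.castAdd j a := by
  simp [ext, finSumFinEquiv_symm_apply_castAdd, finSumFinEquiv_apply_left]

lemma ext_natAdd {p : ℕ} (f : Fin p → Fin j) (t : Fin p) :
    ext f (Fin.natAdd k t) = Fin.natAdd k (f t) := by
  simp [ext, finSumFinEquiv_symm_apply_natAdd, finSumFinEquiv_apply_right]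

lemma ext_strictMono {p : ℕ} {f : Fin p → Fin j} (hf : StrictMono f) :
    StrictMono (ext (k := k) f) := by
  intro x y hxy
  induction x using Fin.addCases with
  | left a =>
    induction y using Fin.addCases with
    | left b =>
      rw [ext_castAdd, ext_castAdd]
      simp only [Fin.lt_def, Fin.coe_castAdd] at hxy ⊢
      exact hxy
    | right t =>
      rw [ext_castAdd, ext_natAdd]
      simp only [Fin.lt_def, Fin.coe_castAdd, Fin.coe_natAdd]
      have := a.isLt
      omega
  | right t =>
    induction y using Fin.addCases with
    | left b =>
      exfalso
      simp only [Fin.lt_def, Fin.coe_castAdd, Fin.coe_natAdd] at hxy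
      have := b.isLt
      omega
    | right t' =>
      rw [ext_natAdd, ext_natAdd]
      have htt : t < t' := by
        simp only [Fin.lt_def, Fin.coe_natAdd] at hxy
        simp only [Fin.lt_def]
        omega
      have h2 := hf htt
      simp only [Fin.lt_def, Fin.coe_natAdd] at h2 ⊢
      omega

variable (A : Matrix (Fin (k + j)) (Fin (k + j)) ℝ)

/-- leading principal block -/
def blkP : Matrix (Fin k) (Fin k) ℝ := A.submatrix (Fin.castAdd j) (Fin.castAdd j)

def blkQ : Matrix (Fin k) (Fin j) ℝ := A.submatrix (Fin.castAdd j) (Fin.natAdd k)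

def blkR : Matrix (Fin j) (Fin k) ℝ := A.submatrix (Fin.natAdd k) (Fin.castAdd j)

def blkT : Matrix (Fin j) (Fin j) ℝ := A.submatrix (Fin.natAdd k) (Fin.natAdd k)

/-- Schur complement of the leading principal block -/
noncomputable def schurS : Matrix (Fin j) (Fin j) ℝ :=
  blkT A - blkR A * (blkP A)⁻¹ * blkQ A

/-- Crabtree–Haynsworth quotient formula. -/
lemma key (hP : IsUnit (blkP A).det) {p : ℕ} (f g : Fin p → Fin j) :
    (A.submatrix (ext f) (ext g)).det = (blkP A).det * ((schurS A).submatrix f g).det := by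
  have : Invertible (blkP A) := (blkP A).invertibleOfIsUnitDet hP
  have hsub : A.submatrix (ext f) (ext g) =
      (Matrix.fromBlocks (blkP A) ((blkQ A).submatrix id g) ((blkR A).submatrix f id)
        ((blkT A).submatrix f g)).submatrix finSumFinEquiv.symm finSumFinEquiv.symm := by
    apply Matrix.ext
    intro x y
    rcases h1 : finSumFinEquiv.symm x with a | t <;>
      rcases h2 : finSumFinEquiv.symm y with b | t' <;>
        simp [ext, h1, h2, blkP, blkQ, blkR, blkT, finSumFinEquiv_apply_left,
          finSumFinEquiv_apply_right]
  rw [hsub, Matrix.det_submatrix_equiv_self, Matrix.det_fromBlocks₁₁, invOf_eq_nonsing_inv]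
  have hSsub : (blkT A).submatrix f g - (blkR A).submatrix f id * (blkP A)⁻¹ *
      (blkQ A).submatrix id g = (schurS A).submatrix f g := by
    apply Matrix.ext
    intro a b
    simp [schurS, Matrix.mul_apply, Matrix.sub_apply, Matrix.submatrix_apply]
  rw [hSsub]

lemma schur_det (hP : IsUnit (blkP A).det) : A.det = (blkP A).det * (schurS A).det := by
  have hid : ext (k := k) (id : Fin j → Fin j) = id := by
    funext x
    simp [ext]
  have := key A hP (id : Fin j → Fin j) id
  simpa [hid, Matrix.submatrix_id_id] using this

lemma schur_tp (hA : TotallyPos A) (hP : 0 < (blkP A).det) : TotallyPos (schurS A) := by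
  intro p f g hf hg
  have h0 : 0 ≤ (A.submatrix (ext f) (ext g)).det :=
    hA _ _ _ (ext_strictMono hf) (ext_strictMono hg)
  rw [key A hP.ne'.isUnit f g] at h0
  by_contra hneg
  push_neg at hneg
  nlinarith

end Schur

lemma corner_zero {j : ℕ} {S : Matrix (Fin (j + 1)) (Fin (j + 1)) ℝ} (hS : TotallyPos S)
    (h0 : S 0 0 = 0) : S.det = 0 := by
  by_cases hrow : ∀ l, S 0 l = 0
  · exact Matrix.det_eq_zero_of_row_eq_zero 0 hrow
  · push_neg at hrow
    obtain ⟨l, hl⟩ := hrow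
    have hlpos : 0 < S 0 l := (tp_entry_nonneg hS 0 l).lt_of_ne (Ne.symm hl)
    have hl0 : (0 : Fin (j + 1)) < l := by
      rcases Fin.eq_zero_or_eq_succ l with h | ⟨l', rfl⟩
      · exact absurd (h ▸ h0) hl
      · exact Fin.succ_pos l'
    have hcol : ∀ r, S r 0 = 0 := by
      intro r
      rcases eq_or_lt_of_le (Fin.zero_le r) with h | h
      · rw [← h, h0]
      · have hf : StrictMono ![(0 : Fin (j + 1)), r] := by
          intro x y hxy
          fin_cases x <;> fin_cases y <;>
            simp_all
        have hg : StrictMono ![(0 : Fin (j + 1)), l] := by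
          intro x y hxy
          fin_cases x <;> fin_cases y <;>
            simp_all
        have hminor := hS 2 ![0, r] ![0, l] hf hg
        rw [Matrix.det_fin_two] at hminor
        simp only [Matrix.submatrix_apply, Matrix.cons_val_zero, Matrix.cons_val_one,
          Matrix.head_cons, h0, zero_mul] at hminor
        have hr0 := tp_entry_nonneg hS r 0
        nlinarith
    exact Matrix.det_eq_zero_of_column_eq_zero 0 hcol

lemma pos_lead : ∀ (k : ℕ) {j : ℕ} (A : Matrix (Fin (k + j)) (Fin (k + j)) ℝ),
    TotallyPos A → 0 < A.det → 0 < (A.submatrix (Fin.castAdd j) (Fin.castAdd j)).det := by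
  intro k
  induction k with
  | zero =>
    intro j A _ _
    rw [Matrix.det_isEmpty]
    exact one_pos
  | succ k ih =>
    intro j A hA hdet
    have h : k + (j + 1) = (k + 1) + j := by omega
    set A' : Matrix (Fin (k + (j + 1))) (Fin (k + (j + 1))) ℝ :=
      A.submatrix (Fin.cast h) (Fin.cast h) with hA'def
    have hcastmono : StrictMono (Fin.cast h) := fun a b hab => by
      simp only [Fin.lt_def, Fin.coe_cast] at hab ⊢
      exact hab
    have hTP' : TotallyPos A' := tp_submatrix hA hcastmono hcastmono
    have hdet' : A'.det = A.det := by
      rw [hA'def]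
      exact Matrix.det_submatrix_equiv_self (finCongr h) A
    have hPpos : 0 < (blkP A').det := ih A' hTP' (by rw [hdet']; exact hdet)
    have hS : TotallyPos (schurS A') := schur_tp A' hTP' hPpos
    have hdetS : 0 < (schurS A').det := by
      have hsd := schur_det A' hPpos.ne'.isUnit
      rw [hdet'] at hsd
      by_contra hneg
      push_neg at hneg
      nlinarith
    have hS00 : 0 < (schurS A') 0 0 := by
      rcases (tp_entry_nonneg hS 0 0).lt_or_eq with hc | hc
      · exact hc
      · exact absurd (corner_zero hS hc.symm) hdetS.ne'
    have hkey := key A' hPpos.ne'.isUnit (fun _ : Fin 1 => (0 : Fin (j + 1))) (fun _ => 0)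
    have hiden : A'.submatrix (ext (fun _ : Fin 1 => (0 : Fin (j + 1)))) (ext fun _ => 0) =
        A.submatrix (Fin.castAdd j) (Fin.castAdd j) := by
      have hval : ∀ x : Fin (k + 1),
          ((ext (k := k) (fun _ : Fin 1 => (0 : Fin (j + 1)))) x).val = x.val := by
        intro x
        induction x using Fin.addCases with
        | left a => rw [ext_castAdd]; rfl
        | right t =>
          rw [ext_natAdd]
          have := t.isLt
          simp only [Fin.coe_natAdd, Fin.val_zero, Fin.coe_castAdd]
          omega
      apply Matrix.ext
      intro x y
      rw [hA'def]
      simp only [Matrix.submatrix_apply]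
      congr 1 <;> exact Fin.ext (by simp only [Fin.coe_cast, Fin.coe_castAdd, hval])
    have h11 : ((schurS A').submatrix (fun _ : Fin 1 => (0 : Fin (j + 1))) fun _ => 0).det =
        (schurS A') 0 0 := by
      rw [Matrix.det_fin_one]
      rfl
    rw [hiden, h11] at hkey
    rw [hkey]
    exact mul_pos hPpos hS00


lemma castAdd_strictMono {k j : ℕ} : StrictMono (Fin.castAdd j : Fin k → Fin (k + j)) := by
  intro a b h
  simp only [Fin.lt_def, Fin.coe_castAdd] at h ⊢
  exact h

lemma castSucc_strictMono {k : ℕ} : StrictMono (Fin.castSucc : Fin k → Fin (k + 1)) := by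
  intro a b h
  simp only [Fin.lt_def, Fin.coe_castSucc] at h ⊢
  exact h

lemma succ_strictMono {k : ℕ} : StrictMono (Fin.succ : Fin k → Fin (k + 1)) := by
  intro a b h
  simp only [Fin.lt_def, Fin.val_succ] at h ⊢
  omega

/-- Fischer-type corner inequality for totally nonnegative matrices. -/
lemma corner : ∀ (k : ℕ) (A : Matrix (Fin (k + 1)) (Fin (k + 1)) ℝ), TotallyPos A →
    A.det ≤ A (Fin.last k) (Fin.last k) * (A.submatrix Fin.castSucc Fin.castSucc).det := by
  intro k
  induction k with
  | zero =>
    intro A hA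
    rw [Matrix.det_fin_one]
    rw [show (Fin.last 0) = 0 from rfl]
    rw [Matrix.det_isEmpty, mul_one]
  | succ k ih =>
    intro A hA
    have hPTP : TotallyPos (blkP (k := k) (j := 2) A) :=
      tp_submatrix hA castAdd_strictMono castAdd_strictMono
    have hdlTP : TotallyPos (A.submatrix Fin.castSucc Fin.castSucc) :=
      tp_submatrix hA castSucc_strictMono castSucc_strictMono
    by_cases hP : 0 < (blkP (k := k) (j := 2) A).det
    · -- Schur complement analysis
      have hSTP : TotallyPos (schurS (k := k) (j := 2) A) :=
        schur_tp (k := k) (j := 2) A hA hP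
      have hkey0 := key (k := k) (j := 2) A hP.ne'.isUnit
        (fun _ : Fin 1 => (0 : Fin 2)) (fun _ => (0 : Fin 2))
      have hkey1 := key (k := k) (j := 2) A hP.ne'.isUnit
        (fun _ : Fin 1 => (1 : Fin 2)) (fun _ => (1 : Fin 2))
      have hval0 : ∀ x : Fin (k + 1),
          ((ext (k := k) (fun _ : Fin 1 => (0 : Fin 2))) x).val = x.val := by
        intro x
        induction x using Fin.addCases with
        | left a => rw [ext_castAdd]; rfl
        | right t =>
          rw [ext_natAdd]
          have := t.isLt
          simp only [Fin.coe_natAdd, Fin.val_zero]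
          omega
      have hiden0 : A.submatrix (ext (k := k) (fun _ : Fin 1 => (0 : Fin 2)))
          (ext (k := k) (fun _ : Fin 1 => (0 : Fin 2))) =
          A.submatrix (Fin.castSucc : Fin (k + 1) → Fin (k + 2))
            (Fin.castSucc : Fin (k + 1) → Fin (k + 2)) := by
        apply Matrix.ext
        intro x y
        simp only [Matrix.submatrix_apply]
        congr 1 <;> exact Fin.ext (by simp only [Fin.coe_castSucc, hval0])
      have h1x1 : ∀ c : Fin 2,
          (((schurS (k := k) (j := 2) A).submatrix (fun _ : Fin 1 => c)
            (fun _ : Fin 1 => c))).det = (schurS (k := k) (j := 2) A) c c := by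
        intro c
        rw [Matrix.det_fin_one]
        rfl
      rw [hiden0, h1x1] at hkey0
      rw [h1x1] at hkey1
      have hA₁TP : TotallyPos (A.submatrix (ext (k := k) (fun _ : Fin 1 => (1 : Fin 2)))
          (ext (k := k) (fun _ : Fin 1 => (1 : Fin 2)))) :=
        tp_submatrix hA (ext_strictMono (strictMono_fin_one _))
          (ext_strictMono (strictMono_fin_one _))
      have hih := ih _ hA₁TP
      have hlastnat : (Fin.last k : Fin (k + 1)) = Fin.natAdd k (0 : Fin 1) :=
        Fin.ext (by simp)
      have hidenLL : (A.submatrix (ext (k := k) (fun _ : Fin 1 => (1 : Fin 2)))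
            (ext (k := k) (fun _ : Fin 1 => (1 : Fin 2)))) (Fin.last k) (Fin.last k) =
          A (Fin.last (k + 1)) (Fin.last (k + 1)) := by
        simp only [Matrix.submatrix_apply]
        congr 1 <;>
        · rw [hlastnat, ext_natAdd]
          exact Fin.ext (by simp [Fin.coe_natAdd])
      have hidenP : (A.submatrix (ext (k := k) (fun _ : Fin 1 => (1 : Fin 2)))
            (ext (k := k) (fun _ : Fin 1 => (1 : Fin 2)))).submatrix
              Fin.castSucc Fin.castSucc = blkP (k := k) (j := 2) A := by
        apply Matrix.ext
        intro x y
        simp only [Matrix.submatrix_apply, blkP]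
        have e1 : ext (k := k) (fun _ : Fin 1 => (1 : Fin 2)) (Fin.castSucc x) =
            Fin.castAdd 2 x := by
          rw [show Fin.castSucc x = Fin.castAdd 1 x from rfl, ext_castAdd]
        have e2 : ext (k := k) (fun _ : Fin 1 => (1 : Fin 2)) (Fin.castSucc y) =
            Fin.castAdd 2 y := by
          rw [show Fin.castSucc y = Fin.castAdd 1 y from rfl, ext_castAdd]
        rw [e1, e2]
      rw [hidenLL, hidenP] at hih
      have hdetA : A.det = (blkP (k := k) (j := 2) A).det * (schurS (k := k) (j := 2) A).det :=
        schur_det (k := k) (j := 2) A hP.ne'.isUnit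
      have hdetS : (schurS (k := k) (j := 2) A).det =
          schurS (k := k) (j := 2) A 0 0 * schurS (k := k) (j := 2) A 1 1 -
            schurS (k := k) (j := 2) A 0 1 * schurS (k := k) (j := 2) A 1 0 :=
        Matrix.det_fin_two _
      have hs01 := tp_entry_nonneg hSTP 0 1
      have hs10 := tp_entry_nonneg hSTP 1 0
      have hs00 := tp_entry_nonneg hSTP 0 0
      have hLL := tp_entry_nonneg hA (Fin.last (k + 1)) (Fin.last (k + 1))
      have hS11le : schurS (k := k) (j := 2) A 1 1 ≤
          A (Fin.last (k + 1)) (Fin.last (k + 1)) := by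
        have h5 : (blkP (k := k) (j := 2) A).det * schurS (k := k) (j := 2) A 1 1 ≤
            (blkP (k := k) (j := 2) A).det * A (Fin.last (k + 1)) (Fin.last (k + 1)) := by
          rw [← hkey1]
          linarith [hih]
        exact le_of_mul_le_mul_left h5 hP
      rw [hdetA, hdetS, hkey0]
      nlinarith [mul_le_mul_of_nonneg_left hS11le
        (mul_nonneg hP.le hs00), mul_nonneg hP.le (mul_nonneg hs01 hs10)]
    · -- degenerate case : leading block singular forces det A = 0
      push_neg at hP
      have hP0 : (blkP (k := k) (j := 2) A).det = 0 :=
        le_antisymm hP (tp_det_nonneg hPTP)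
      have hA0 : A.det = 0 := by
        rcases (tp_det_nonneg hA).lt_or_eq with hc | hc
        · exfalso
          have hpos : 0 < (blkP (k := k) (j := 2) A).det := pos_lead k (j := 2) A hA hc
          rw [hP0] at hpos
          exact lt_irrefl _ hpos
        · exact hc.symm
      rw [hA0]
      exact mul_nonneg (tp_entry_nonneg hA _ _) (tp_det_nonneg hdlTP)

/-- first-corner version, by reversal symmetry -/
lemma corner' (j : ℕ) (S : Matrix (Fin (j + 1)) (Fin (j + 1)) ℝ) (hS : TotallyPos S) :
    S.det ≤ S 0 0 * (S.submatrix Fin.succ Fin.succ).det := by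
  have hrev : TotallyPos (S.submatrix Fin.rev Fin.rev) := tp_rev hS
  have hc := corner j (S.submatrix Fin.rev Fin.rev) hrev
  have e1 : (S.submatrix Fin.rev Fin.rev).det = S.det :=
    Matrix.det_submatrix_equiv_self Fin.revPerm S
  have e2 : (S.submatrix Fin.rev Fin.rev) (Fin.last j) (Fin.last j) = S 0 0 := by
    simp [Fin.rev_last]
  have e3 : ((S.submatrix Fin.rev Fin.rev).submatrix Fin.castSucc Fin.castSucc).det =
      (S.submatrix Fin.succ Fin.succ).det := by
    rw [Matrix.submatrix_submatrix]
    have hcomp : (Fin.rev ∘ Fin.castSucc : Fin j → Fin (j + 1)) =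
        Fin.succ ∘ (Fin.rev : Fin j → Fin j) := by
      funext x
      exact Fin.rev_castSucc x
    rw [hcomp, ← Matrix.submatrix_submatrix]
    exact Matrix.det_submatrix_equiv_self Fin.revPerm (S.submatrix Fin.succ Fin.succ)
  rw [e1, e2, e3] at hc
  exact hc

/-- The main inequality : Fischer / Koteljanskii special case. -/
lemma main {m : ℕ} (A : Matrix (Fin (m + 1)) (Fin (m + 1)) ℝ) (hA : TotallyPos A)
    (hdet : 0 < A.det) (i : Fin (m + 1)) :
    A.det ≤ A i i * (A.submatrix i.succAbove i.succAbove).det := by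
  have hkm : i.val ≤ m := Nat.lt_succ_iff.mp i.isLt
  have h : i.val + (m - i.val + 1) = m + 1 := by omega
  set A' : Matrix (Fin (i.val + (m - i.val + 1))) (Fin (i.val + (m - i.val + 1))) ℝ :=
    A.submatrix (Fin.cast h) (Fin.cast h) with hA'def
  have hcastmono : StrictMono (Fin.cast h) := fun a b hab => by
    simp only [Fin.lt_def, Fin.coe_cast] at hab ⊢
    exact hab
  have hTP' : TotallyPos A' := tp_submatrix hA hcastmono hcastmono
  have hdet' : A'.det = A.det := Matrix.det_submatrix_equiv_self (finCongr h) A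
  have hP : 0 < (blkP A').det := pos_lead i.val A' hTP' (by rw [hdet']; exact hdet)
  have hSTP : TotallyPos (schurS A') := schur_tp A' hTP' hP
  have hC' := corner' (m - i.val) (schurS A') hSTP
  -- identification of S 0 0 related minor
  have hkey0 := key A' hP.ne'.isUnit (fun _ : Fin 1 => (0 : Fin (m - i.val + 1))) (fun _ => 0)
  have h1x1 : (((schurS A').submatrix (fun _ : Fin 1 => (0 : Fin (m - i.val + 1)))
      fun _ => 0)).det = (schurS A') 0 0 := by
    rw [Matrix.det_fin_one]; rfl
  rw [h1x1] at hkey0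
  set M0 : Matrix (Fin (i.val + 1)) (Fin (i.val + 1)) ℝ :=
    A'.submatrix (ext (fun _ : Fin 1 => (0 : Fin (m - i.val + 1)))) (ext fun _ => 0) with hM0def
  have hM0TP : TotallyPos M0 :=
    tp_submatrix hTP' (ext_strictMono (strictMono_fin_one _))
      (ext_strictMono (strictMono_fin_one _))
  have hval0 : ∀ x : Fin (i.val + 1),
      ((ext (k := i.val) (fun _ : Fin 1 => (0 : Fin (m - i.val + 1)))) x).val = x.val := by
    intro x
    induction x using Fin.addCases with
    | left a => rw [ext_castAdd]; rfl
    | right t =>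
      rw [ext_natAdd]
      have := t.isLt
      simp only [Fin.coe_natAdd, Fin.val_zero]
      omega
  have hcorner0 := corner i.val M0 hM0TP
  have hM0LL : M0 (Fin.last i.val) (Fin.last i.val) = A i i := by
    rw [hM0def, hA'def]
    simp only [Matrix.submatrix_apply]
    congr 1 <;>
      exact Fin.ext (by simp only [Fin.coe_cast, hval0, Fin.val_last])
  have hM0P : M0.submatrix Fin.castSucc Fin.castSucc = blkP A' := by
    rw [hM0def]
    apply Matrix.ext
    intro x y
    simp only [Matrix.submatrix_apply, blkP]
    congr 1 <;>
      exact Fin.ext (by simp only [Fin.coe_cast, hval0, Fin.coe_castSucc, Fin.coe_castAdd])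
  rw [hM0LL, hM0P] at hcorner0
  have hS00le : (schurS A') 0 0 ≤ A i i := by
    have h5 : (blkP A').det * (schurS A') 0 0 ≤ (blkP A').det * A i i := by
      rw [← hkey0]
      nlinarith [hcorner0]
    exact le_of_mul_le_mul_left h5 hP
  -- identification of the complementary minor
  have h2 : i.val + (m - i.val) = m := by omega
  have hkeysucc := key A' hP.ne'.isUnit (Fin.succ : Fin (m - i.val) → Fin (m - i.val + 1))
    (Fin.succ)
  have hsuccab : ∀ z : Fin m, ((i.succAbove z) : ℕ) = if z.val < i.val then z.val
      else z.val + 1 := by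
    intro z
    rw [Fin.succAbove]
    split_ifs with hc1 hc2 hc3
    · rfl
    · exfalso
      simp only [Fin.lt_def, Fin.coe_castSucc] at hc1
      omega
    · exfalso
      simp only [Fin.lt_def, Fin.coe_castSucc] at hc1 hc3
      omega
    · rfl
  have hidenmin : A'.submatrix (ext Fin.succ) (ext Fin.succ) =
      (A.submatrix i.succAbove i.succAbove).submatrix (Fin.cast h2) (Fin.cast h2) := by
    have hvalsucc : ∀ x : Fin (i.val + (m - i.val)),
        ((ext (k := i.val) (Fin.succ : Fin (m - i.val) → Fin (m - i.val + 1))) x).val =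
          if x.val < i.val then x.val else x.val + 1 := by
      intro x
      induction x using Fin.addCases with
      | left a =>
        rw [ext_castAdd]
        simp only [Fin.coe_castAdd]
        rw [if_pos a.isLt]
      | right t =>
        rw [ext_natAdd]
        simp only [Fin.coe_natAdd, Fin.val_succ]
        rw [if_neg (by omega)]
        omega
    apply Matrix.ext
    intro x y
    rw [hA'def]
    simp only [Matrix.submatrix_apply]
    congr 1 <;>
      exact Fin.ext (by
        simp only [Fin.coe_cast, hvalsucc, hsuccab])
  have hdetmin : (A'.submatrix (ext Fin.succ) (ext Fin.succ)).det =
      (A.submatrix i.succAbove i.succAbove).det := by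
    rw [hidenmin]
    exact Matrix.det_submatrix_equiv_self (finCongr h2) _
  rw [hdetmin] at hkeysucc
  have hdSnonneg : 0 ≤ ((schurS A').submatrix Fin.succ Fin.succ).det :=
    hSTP _ _ _ succ_strictMono succ_strictMono
  have hdetA : A.det = (blkP A').det * (schurS A').det := by
    rw [← hdet']
    exact schur_det A' hP.ne'.isUnit
  rw [hdetA, hkeysucc]
  calc (blkP A').det * (schurS A').det
      ≤ (blkP A').det * ((schurS A') 0 0 * ((schurS A').submatrix Fin.succ Fin.succ).det) := by
        nlinarith [hC']
    _ ≤ (blkP A').det * (A i i * ((schurS A').submatrix Fin.succ Fin.succ).det) := by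
        nlinarith [hS00le, hdSnonneg, hP]
    _ = A i i * ((blkP A').det * ((schurS A').submatrix Fin.succ Fin.succ).det) := by ring

end TPaux


/-- **Diagonal entries of a totally positive matrix and of its inverse.** If `B` is an
invertible, totally positive `n × n` real matrix, then `B(i,i) > 0` and
`B⁻¹(i,i) ≥ 1 / B(i,i)` for every index `i`. -/
theorem totallyPos_inv_diag (n : ℕ) (B : Matrix (Fin n) (Fin n) ℝ)
    (hB : IsUnit B.det) (htp : TotallyPos B) (i : Fin n) :
    0 < B i i ∧ 1 / B i i ≤ B⁻¹ i i := by
  obtain ⟨m, rfl⟩ : ∃ m, n = m + 1 := ⟨n - 1, by have := i.pos; omega⟩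
  have hdet : 0 < B.det :=
    (TPaux.tp_det_nonneg htp).lt_of_ne (Ne.symm hB.ne_zero)
  have hmain := TPaux.main B htp hdet i
  have hMnonneg : 0 ≤ (B.submatrix i.succAbove i.succAbove).det :=
    TPaux.tp_det_nonneg (TPaux.tp_submatrix htp (Fin.strictMono_succAbove i)
      (Fin.strictMono_succAbove i))
  have hBii : 0 < B i i := by
    rcases (TPaux.tp_entry_nonneg htp i i).lt_or_eq with hc | hc
    · exact hc
    · exfalso
      rw [← hc, zero_mul] at hmain
      exact absurd (lt_of_lt_of_le hdet hmain) (lt_irrefl 0)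
  refine ⟨hBii, ?_⟩
  have hMpos : 0 < (B.submatrix i.succAbove i.succAbove).det := by
    nlinarith
  have hinv : B⁻¹ i i = B.det⁻¹ * (B.submatrix i.succAbove i.succAbove).det := by
    rw [Matrix.inv_def, Matrix.smul_apply, Matrix.adjugate_fin_succ_eq_det_submatrix,
      Ring.inverse_eq_inv, smul_eq_mul]
    have hpow : (-1 : ℝ) ^ ((i : ℕ) + (i : ℕ)) = 1 := Even.neg_one_pow ⟨i, rfl⟩
    rw [hpow, one_mul]
  rw [hinv, inv_mul_eq_div, div_le_div_iff₀ hBii hdet]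
  nlinarith [hmain]
end

section
/- Let d ≥ 1 and ρ ∈ [0,1). Let (𝓕_n)_{n≥0} be an interval filtration on a d-dimensional rectangle I, and define for f ∈ L^1(I) the maximal function 𝓜f(x) = sup_n Σ_{A atom of 𝓕_n} ρ^{|d_n(A, A_n(x))|_1} / |conv(A, A_n(x))| · ∫_A |f(t)| dt. Then there exists a constant C depending only on the dimension d and on ρ such that |{ x ∈ I : 𝓜f(x) > λ }| ≤ C ‖f‖_{L^1(I)} / λ for every λ > 0 and every f ∈ L^1(I). -/
open MeasureTheory Set

structure IntervalPartition where
  a : ℝ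
  b : ℝ
  m : ℕ
  m_pos : 0 < m
  t : Fin (m + 1) → ℝ
  t_mono : StrictMono t
  t_first : t 0 = a
  t_last : t (Fin.last m) = b

namespace IntervalPartition

/-- The `i`-th breakpoint of the partition (extended to all of `ℕ`). -/
def pt (P : IntervalPartition) (i : ℕ) : ℝ :=
  P.t ⟨min i P.m, Nat.lt_succ_of_le (min_le_right _ _)⟩

/-- The underlying interval `[a, b)`. -/
def interval (P : IntervalPartition) : Set ℝ := Set.Ico P.a P.b

/-- The `i`-th atom of the partition, `[t_i, t_{i+1})`. -/
def atomN (P : IntervalPartition) (i : ℕ) : Set ℝ := Set.Ico (P.pt i) (P.pt (i + 1))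

/-- The length of the `i`-th atom. -/
def atomLen (P : IntervalPartition) (i : ℕ) : ℝ := P.pt (i + 1) - P.pt i

/-- Membership in the spline space `S_k(𝓕)`:  `(k-2)`-times continuously differentiable
on the interval and a polynomial of degree at most `k - 1` on each atom. -/
def IsSpline (k : ℕ) (P : IntervalPartition) (f : ℝ → ℝ) : Prop :=
  (2 ≤ k → ContDiffOn ℝ (k - 2 : ℕ) f P.interval) ∧
  ∀ i < P.m, ∃ p : Polynomial ℝ, p.natDegree ≤ k - 1 ∧ ∀ x ∈ P.atomN i, f x = p.eval x

/-- `P.Refines Q` : `Q` is finer than `P` (same interval, more breakpoints). -/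
def Refines (P Q : IntervalPartition) : Prop :=
  P.a = Q.a ∧ P.b = Q.b ∧ Set.range P.t ⊆ Set.range Q.t

/-- The pair `(i, j)` describes a B-spline support of order `r`:
the union of the consecutive atoms `i, …, j`, where either `j - i + 1 = r`, or
`j - i + 1 < r` and the union touches an endpoint of the interval. -/
def IsBSupportIdx (P : IntervalPartition) (r i j : ℕ) : Prop :=
  i ≤ j ∧ j < P.m ∧ (j + 1 - i = r ∨ (j + 1 - i < r ∧ (i = 0 ∨ j = P.m - 1)))

/-- The B-spline support as a set. -/
def bSupportSet (P : IntervalPartition) (i j : ℕ) : Set ℝ := Set.Ico (P.pt i) (P.pt (j + 1))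

/-- The length of a B-spline support. -/
def bSupportLen (P : IntervalPartition) (i j : ℕ) : ℝ := P.pt (j + 1) - P.pt i

/-- `k`-regularity with parameter `γ` of a single interval σ-algebra: any two B-spline
supports of order `k` at Euclidean distance zero have comparable lengths. -/
def KRegular (P : IntervalPartition) (k : ℕ) (γ : ℝ) : Prop :=
  ∀ i j i' j' : ℕ, P.IsBSupportIdx k i j → P.IsBSupportIdx k i' j' →
    P.pt i' ≤ P.pt (j + 1) → P.pt i ≤ P.pt (j' + 1) →
    P.bSupportLen i j ≤ γ * P.bSupportLen i' j'

-- The index of the atom containing `x` (junk value if there is none).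
open Classical in
noncomputable def idx (P : IntervalPartition) (x : ℝ) : ℕ :=
  if h : ∃ i, i < P.m ∧ x ∈ P.atomN i then h.choose else 0

end IntervalPartition

/-- The `d`-dimensional rectangle underlying a product of interval σ-algebras. -/
def rect {d : ℕ} (P : Fin d → IntervalPartition) : Set (Fin d → ℝ) :=
  Set.univ.pi fun δ => (P δ).interval

/-- The atom of the product σ-algebra with index vector `i`. -/
def prodAtomN {d : ℕ} (P : Fin d → IntervalPartition) (i : Fin d → ℕ) : Set (Fin d → ℝ) :=
  Set.univ.pi fun δ => (P δ).atomN (i δ)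

/-- `|d(A,B)|₁` for atoms with index vectors `i`, `j`. -/
def dist1 {d : ℕ} (i j : Fin d → ℕ) : ℕ := ∑ δ, ((i δ : ℤ) - (j δ : ℤ)).natAbs

/-- The volume of `conv(A, B)`, the smallest axis-parallel rectangle containing the
atoms with index vectors `i` and `j`. -/
def convVol {d : ℕ} (P : Fin d → IntervalPartition) (i j : Fin d → ℕ) : ℝ :=
  ∏ δ, ((P δ).pt (max (i δ) (j δ) + 1) - (P δ).pt (min (i δ) (j δ)))

/-- The kernel sum `Σ_A q^{|d(A, A_ix)|₁} / |conv(A, A_ix)| ∫_A |f|`. -/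
noncomputable def kern {d : ℕ} (P : Fin d → IntervalPartition) (q : ℝ)
    (f : (Fin d → ℝ) → ℝ) (ix : Fin d → ℕ) : ℝ :=
  ∑ ia : (∀ δ, Fin ((P δ).m)),
    q ^ dist1 (fun δ => (ia δ : ℕ)) ix / convVol P (fun δ => (ia δ : ℕ)) ix *
      ∫ y in prodAtomN P (fun δ => (ia δ : ℕ)), |f y|

/-- Coordinatewise `k`-regularity with parameter `γ` of a multivariate filtration. -/
def KRegularAll (d : ℕ) (F : ℕ → Fin d → IntervalPartition) (k : Fin d → ℕ) (γ : ℝ) : Prop :=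
  ∀ n δ, (F n δ).KRegular (k δ) γ

/-- Direction `r`-regularity with parameter `β`: there is no direction `δ`, no
monotone sequence of times `n 0 ≤ n 1 ≤ …`, no strictly decreasing chain of atoms
`prodAtomN (F (n 0)) (ix 0) ⊋ … ⊋ prodAtomN (F (n (β-1))) (ix (β-1))` and no B-spline
support `B` of order `r δ` in the `δ`-th coordinate of `F (n 0)` containing the `δ`-th
component of the first atom such that `B` is still a B-spline support of order `r δ`
in the `δ`-th coordinate of `F (n (β-1))`. -/
def DirRegular (d : ℕ) (F : ℕ → Fin d → IntervalPartition) (r : Fin d → ℕ) (β : ℕ) : Prop :=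
  ¬ ∃ (δ : Fin d) (n : ℕ → ℕ) (ix : ℕ → Fin d → ℕ) (i j : ℕ),
      (∀ l l', l ≤ l' → n l ≤ n l') ∧
      (∀ l, l < β → ∀ δ', ix l δ' < (F (n l) δ').m) ∧
      (∀ l l', l < l' → l' < β →
        prodAtomN (F (n l')) (ix l') ⊂ prodAtomN (F (n l)) (ix l)) ∧
      (F (n 0) δ).IsBSupportIdx (r δ) i j ∧
      (F (n 0) δ).atomN (ix 0 δ) ⊆ (F (n 0) δ).bSupportSet i j ∧
      ∃ i' j', (F (n (β - 1)) δ).IsBSupportIdx (r δ) i' j' ∧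
        (F (n (β - 1)) δ).bSupportSet i' j' = (F (n 0) δ).bSupportSet i j

/-- The tensor product spline space: the linear span of products of coordinate splines. -/
def TensorSplineSpan (d : ℕ) (k : Fin d → ℕ) (P : Fin d → IntervalPartition) :
    Submodule ℝ ((Fin d → ℝ) → ℝ) :=
  Submodule.span ℝ {G : (Fin d → ℝ) → ℝ |
    ∃ g : Fin d → ℝ → ℝ, (∀ δ, IntervalPartition.IsSpline (k δ) (P δ) (g δ)) ∧
      G = fun x => ∏ δ, g δ (x δ)}

/-- `g` is the orthogonal projection (in `L²` of the rectangle) of `f` onto the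
tensor product spline space. -/
def IsProj (d : ℕ) (k : Fin d → ℕ) (P : Fin d → IntervalPartition)
    (f g : (Fin d → ℝ) → ℝ) : Prop :=
  g ∈ TensorSplineSpan d k P ∧ ∀ h ∈ TensorSplineSpan d k P,
    ∫ x in rect P, g x * h x = ∫ x in rect P, f x * h x

/-- A multivariate interval filtration in standard form: it starts from the trivial
σ-algebra and at each step exactly one atom of exactly one coordinate σ-algebra is
split into two. -/
def StandardForm (d : ℕ) (F : ℕ → Fin d → IntervalPartition) : Prop :=
  (∀ δ, (F 0 δ).m = 1) ∧
  ∀ n, ∃ δ₀, (∀ δ, δ ≠ δ₀ → F (n + 1) δ = F n δ) ∧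
    (F n δ₀).Refines (F (n + 1) δ₀) ∧ (F (n + 1) δ₀).m = (F n δ₀).m + 1


namespace IntervalPartition
-- ### basics

theorem pt_mono (P : IntervalPartition) : Monotone P.pt := by
  intro i j hij
  exact (P.t_mono.monotone (by simp [Fin.le_def, min_le_min_right _ hij]))

theorem pt_lt_pt (P : IntervalPartition) {i j : ℕ} (h : i < j) (hj : j ≤ P.m) :
    P.pt i < P.pt j := by
  apply P.t_mono
  simp [Fin.lt_def, min_eq_left (le_of_lt (lt_of_lt_of_le h hj)), min_eq_left hj, h]

theorem pt_zero (P : IntervalPartition) : P.pt 0 = P.a := by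
  simpa [pt] using P.t_first

theorem pt_of_le (P : IntervalPartition) {i : ℕ} (h : i ≤ P.m) :
    P.pt i = P.t ⟨i, Nat.lt_succ_of_le h⟩ := by
  simp [pt, min_eq_left h]

theorem pt_m (P : IntervalPartition) : P.pt P.m = P.b := by
  rw [P.pt_of_le le_rfl]; exact P.t_last

theorem le_of_pt_lt_pt (P : IntervalPartition) {i j : ℕ} (h : P.pt i < P.pt j) : i < j := by
  by_contra hc
  exact absurd (P.pt_mono (not_lt.mp hc)) (not_le.mpr h)

theorem atom_subset_interval (P : IntervalPartition) {i : ℕ} (hi : i < P.m) :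
    P.atomN i ⊆ P.interval := by
  apply Set.Ico_subset_Ico
  · rw [← P.pt_zero]; exact P.pt_mono (Nat.zero_le _)
  · rw [← P.pt_m]; exact P.pt_mono hi

theorem atom_nonempty (P : IntervalPartition) {i : ℕ} (hi : i < P.m) :
    (P.atomN i).Nonempty := by
  exact Set.nonempty_Ico.mpr (P.pt_lt_pt (Nat.lt_succ_self i) hi)

theorem exists_mem_atom (P : IntervalPartition) {y : ℝ} (hy : y ∈ P.interval) :
    ∃ i, i < P.m ∧ y ∈ P.atomN i := by
  classical
  have h0 : P.pt 0 ≤ y := by rw [P.pt_zero]; exact hy.1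
  have hspec : P.pt (Nat.findGreatest (fun j => P.pt j ≤ y) P.m) ≤ y :=
    Nat.findGreatest_spec (P := fun j => P.pt j ≤ y) (Nat.zero_le _) h0
  set k := Nat.findGreatest (fun j => P.pt j ≤ y) P.m with hk
  have hkm : k < P.m := by
    rcases lt_or_eq_of_le (Nat.findGreatest_le (P := fun j => P.pt j ≤ y) P.m) with h | h
    · exact h
    · exfalso
      rw [hk, h, P.pt_m] at hspec
      exact absurd hy.2 (not_lt.mpr hspec)
  refine ⟨k, hkm, hspec, ?_⟩
  have hgr : ¬ (fun j => P.pt j ≤ y) (k+1) :=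
    Nat.findGreatest_is_greatest (Nat.lt_succ_self k) (by omega : k + 1 ≤ P.m)
  exact not_le.mp hgr

theorem atom_unique (P : IntervalPartition) {i j : ℕ} (hi : i < P.m) (hj : j < P.m)
    {y : ℝ} (hyi : y ∈ P.atomN i) (hyj : y ∈ P.atomN j) : i = j := by
  by_contra hne
  rcases Nat.lt_or_ge i j with h | h
  · have : P.pt (i+1) ≤ P.pt j := P.pt_mono (by omega)
    exact absurd (le_trans this hyj.1) (not_le.mpr hyi.2)
  · have hj' : j < i := by omega
    have : P.pt (j+1) ≤ P.pt i := P.pt_mono (by omega)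
    exact absurd (le_trans this hyi.1) (not_le.mpr hyj.2)

theorem idx_spec (P : IntervalPartition) {y : ℝ} (hy : y ∈ P.interval) :
    P.idx y < P.m ∧ y ∈ P.atomN (P.idx y) := by
  classical
  have h : ∃ i, i < P.m ∧ y ∈ P.atomN i := P.exists_mem_atom hy
  rw [idx, dif_pos h]
  exact h.choose_spec

-- ### refinement

theorem Refines.refl (P : IntervalPartition) : P.Refines P := ⟨rfl, rfl, subset_rfl⟩

theorem Refines.trans {P Q R : IntervalPartition} (h1 : P.Refines Q) (h2 : Q.Refines R) :
    P.Refines R :=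
  ⟨h1.1.trans h2.1, h1.2.1.trans h2.2.1, h1.2.2.trans h2.2.2⟩

/-- index in `Q` of the `i`-th breakpoint of `P`. -/
noncomputable def sigma (P Q : IntervalPartition) (i : ℕ) : ℕ := by
  classical
  exact if h : ∃ j, j ≤ Q.m ∧ Q.pt j = P.pt i then h.choose else 0

theorem sigma_spec {P Q : IntervalPartition} (h : P.Refines Q) {i : ℕ} (hi : i ≤ P.m) :
    sigma P Q i ≤ Q.m ∧ Q.pt (sigma P Q i) = P.pt i := by
  classical
  have hex : ∃ j, j ≤ Q.m ∧ Q.pt j = P.pt i := by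
    have : P.pt i ∈ Set.range P.t := by rw [P.pt_of_le hi]; exact ⟨_, rfl⟩
    rcases h.2.2 this with ⟨k, hk⟩
    refine ⟨k.val, Nat.lt_succ_iff.mp k.isLt, ?_⟩
    rw [Q.pt_of_le (Nat.lt_succ_iff.mp k.isLt)]
    convert hk using 2
  rw [sigma, dif_pos hex]
  exact hex.choose_spec

theorem sigma_step {P Q : IntervalPartition} (h : P.Refines Q) {i k : ℕ} (hik : i + k ≤ P.m) :
    sigma P Q i + k ≤ sigma P Q (i + k) := by
  induction k with
  | zero => simp
  | succ k ih =>
    have h1 : i + k ≤ P.m := by omega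
    have ih' := ih h1
    have hlt : sigma P Q (i + k) < sigma P Q (i + (k + 1)) := by
      apply Q.le_of_pt_lt_pt
      rw [(sigma_spec h h1).2, (sigma_spec h hik).2]
      exact P.pt_lt_pt (by omega) (by omega)
    omega

theorem Refines.interval_eq {P Q : IntervalPartition} (h : P.Refines Q) :
    P.interval = Q.interval := by
  rw [interval, interval, h.1, h.2.1]

end IntervalPartition
namespace IntervalPartition

/-- The core 1-D geometry: if `y` lies in atom `aP` of the coarser partition `P` and
in atom `aQ` of the finer `Q`, and `bP`, `bQ` are at the same signed index displacement
from `aP`, `aQ` respectively, then the `Q`-atom `bQ` meets `conv(A_P, B_P)`. -/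
theorem core1D {P Q : IntervalPartition} (h : P.Refines Q) {y : ℝ}
    {aP bP aQ bQ : ℕ} (haP : aP < P.m) (hbP : bP < P.m) (haQ : aQ < Q.m) (hbQ : bQ < Q.m)
    (hs : (aP : ℤ) - bP = (aQ : ℤ) - bQ)
    (hyP : y ∈ P.atomN aP) (hyQ : y ∈ Q.atomN aQ) :
    (Q.atomN bQ ∩ Set.Ico (P.pt (min aP bP)) (P.pt (max aP bP + 1))).Nonempty := by
  rcases Nat.lt_trichotomy bP aP with hlt | heq | hgt
  · -- bP < aP, hence bQ < aQ with the same gap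
    have hk : aQ = bQ + (aP - bP) := by omega
    have hmin : min aP bP = bP := by omega
    have hmax : max aP bP = aP := by omega
    rw [hmin, hmax]
    by_contra hne
    have hd : Q.pt (bQ + 1) ≤ P.pt bP ∨ P.pt (aP + 1) ≤ Q.pt bQ := by
      by_contra hcon
      push_neg at hcon
      obtain ⟨h1, h2⟩ := hcon
      refine hne ⟨max (Q.pt bQ) (P.pt bP), ⟨le_max_left _ _, ?_⟩, le_max_right _ _, ?_⟩
      · exact max_lt (Q.pt_lt_pt (Nat.lt_succ_self _) hbQ) h1
      · exact max_lt h2 (P.pt_lt_pt (by omega) haP)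
    rcases hd with hd | hd
    · -- B_Q entirely left of conv: count breakpoints
      set j := sigma P Q bP with hj
      obtain ⟨hjm, hjpt⟩ := sigma_spec h (le_of_lt hbP)
      have hj1 : bQ + 1 ≤ j := by
        by_contra hc
        have hle : j ≤ bQ := by omega
        have : Q.pt j ≤ Q.pt bQ := Q.pt_mono hle
        have h2 : Q.pt bQ < Q.pt (bQ + 1) := Q.pt_lt_pt (Nat.lt_succ_self _) hbQ
        rw [hjpt] at this
        linarith
      have hstep : sigma P Q bP + (aP - bP) ≤ sigma P Q aP := by
        have := sigma_step h (i := bP) (k := aP - bP) (by omega)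
        have he : bP + (aP - bP) = aP := by omega
        rwa [he] at this
      have hup : sigma P Q aP ≤ aQ := by
        by_contra hc
        have hle : aQ + 1 ≤ sigma P Q aP := by omega
        have h1 : Q.pt (aQ + 1) ≤ Q.pt (sigma P Q aP) := Q.pt_mono hle
        have h2 : Q.pt (sigma P Q aP) = P.pt aP := (sigma_spec h (le_of_lt haP)).2
        have h3 : P.pt aP ≤ y := hyP.1
        have h4 : y < Q.pt (aQ + 1) := hyQ.2
        linarith
      omega
    · -- B_Q right of conv: impossible since B_Q is left of A_Q ∋ y
      have h1 : Q.pt bQ ≤ Q.pt aQ := Q.pt_mono (by omega)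
      have h2 : Q.pt aQ ≤ y := hyQ.1
      have h3 : y < P.pt (aP + 1) := hyP.2
      linarith
  · -- equal: bQ = aQ, take y itself
    have : bQ = aQ := by omega
    subst heq this
    refine ⟨y, hyQ, ?_, ?_⟩
    · simpa using hyP.1
    · simpa using hyP.2
  · -- aP < bP: symmetric
    have hk : bQ = aQ + (bP - aP) := by omega
    have hmin : min aP bP = aP := by omega
    have hmax : max aP bP = bP := by omega
    rw [hmin, hmax]
    by_contra hne
    have hd : Q.pt (bQ + 1) ≤ P.pt aP ∨ P.pt (bP + 1) ≤ Q.pt bQ := by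
      by_contra hcon
      push_neg at hcon
      obtain ⟨h1, h2⟩ := hcon
      refine hne ⟨max (Q.pt bQ) (P.pt aP), ⟨le_max_left _ _, ?_⟩, le_max_right _ _, ?_⟩
      · exact max_lt (Q.pt_lt_pt (Nat.lt_succ_self _) hbQ) h1
      · exact max_lt h2 (P.pt_lt_pt (by omega) hbP)
    rcases hd with hd | hd
    · have h1 : Q.pt (aQ + 1) ≤ Q.pt (bQ + 1) := Q.pt_mono (by omega)
      have h2 : y < Q.pt (aQ + 1) := hyQ.2
      have h3 : P.pt aP ≤ y := hyP.1
      linarith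
    · set j := sigma P Q (bP + 1) with hj
      obtain ⟨hjm, hjpt⟩ := sigma_spec h (by omega : bP + 1 ≤ P.m)
      have hj1 : j ≤ bQ := by
        by_contra hc
        have hlt2 : bQ < j := by omega
        have : Q.pt bQ < Q.pt j := Q.pt_lt_pt hlt2 hjm
        rw [hjpt] at this
        linarith
      have hstep : sigma P Q (aP + 1) + (bP - aP) ≤ sigma P Q (bP + 1) := by
        have := sigma_step h (i := aP + 1) (k := bP - aP) (by omega)
        have he : aP + 1 + (bP - aP) = bP + 1 := by omega
        rwa [he] at this
      have hlow : aQ + 1 ≤ sigma P Q (aP + 1) := by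
        by_contra hc
        have hle : sigma P Q (aP + 1) ≤ aQ := by omega
        have h1 : Q.pt (sigma P Q (aP + 1)) ≤ Q.pt aQ := Q.pt_mono hle
        have h2 : Q.pt (sigma P Q (aP + 1)) = P.pt (aP + 1) := (sigma_spec h (by omega)).2
        have h3 : Q.pt aQ ≤ y := hyQ.1
        have h4 : y < P.pt (aP + 1) := hyP.2
        linarith
      omega

/-- A finer atom meeting an interval with coarser-breakpoint endpoints is contained in it. -/
theorem atom_subset_of_inter {P Q : IntervalPartition} (h : P.Refines Q) {k lo hi : ℕ}
    (hk : k < Q.m) (hlo : lo ≤ P.m) (hhi : hi ≤ P.m)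
    (hne : (Q.atomN k ∩ Set.Ico (P.pt lo) (P.pt hi)).Nonempty) :
    Q.atomN k ⊆ Set.Ico (P.pt lo) (P.pt hi) := by
  obtain ⟨x, hx1, hx2⟩ := hne
  obtain ⟨hlom, hlopt⟩ := sigma_spec h hlo
  obtain ⟨hhim, hhipt⟩ := sigma_spec h hhi
  have h1 : sigma P Q lo < k + 1 := by
    apply Q.le_of_pt_lt_pt
    rw [hlopt]
    exact lt_of_le_of_lt hx2.1 hx1.2
  have h2 : k < sigma P Q hi := by
    apply Q.le_of_pt_lt_pt
    rw [hhipt]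
    exact lt_of_le_of_lt hx1.1 hx2.2
  apply Set.Ico_subset_Ico
  · rw [← hlopt]; exact Q.pt_mono (by omega)
  · rw [← hhipt]; exact Q.pt_mono (by omega)

theorem atom_subset_conv (P : IntervalPartition) (a b : ℕ) :
    P.atomN b ⊆ Set.Ico (P.pt (min a b)) (P.pt (max a b + 1)) :=
  Set.Ico_subset_Ico (P.pt_mono (min_le_right _ _)) (P.pt_mono (by omega))

end IntervalPartition
-- ### Generic greedy selection along time

section Selection

variable {ι : Type*} {X : Type*} (S : Set (ℕ × ι)) (B C : ℕ × ι → Set X)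

def Ks : ℕ → Set (ℕ × ι)
  | 0 => {p | p.1 = 0 ∧ p ∈ S}
  | (n + 1) => Ks n ∪ {p | p.1 = n + 1 ∧ p ∈ S ∧ ∀ q ∈ Ks n, B p ∩ C q = ∅}

def kept : Set (ℕ × ι) := {p | p ∈ Ks S B C p.1}

variable {S B C}

theorem mem_Ks_time {p : ℕ × ι} {n : ℕ} (h : p ∈ Ks S B C n) : p.1 ≤ n ∧ p ∈ S := by
  induction n with
  | zero => exact ⟨le_of_eq h.1, h.2⟩
  | succ n ih =>
    rcases h with h | h
    · exact ⟨le_trans (ih h).1 (Nat.le_succ n), (ih h).2⟩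
    · exact ⟨le_of_eq h.1, h.2.1⟩

theorem Ks_mono {m n : ℕ} (h : m ≤ n) : Ks S B C m ⊆ Ks S B C n := by
  induction n with
  | zero =>
    have : m = 0 := by omega
    subst this; exact subset_rfl
  | succ n ih =>
    rcases Nat.lt_or_ge m (n + 1) with h' | h'
    · exact (ih (by omega)).trans (Set.subset_union_left)
    · have : m = n + 1 := by omega
      subst this; exact subset_rfl

theorem mem_Ks_self {p : ℕ × ι} {n : ℕ} (h : p ∈ Ks S B C n) : p ∈ kept S B C := by
  induction n with
  | zero =>
    have h1 := h.1
    show p ∈ Ks S B C p.1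
    rw [h1]; exact h
  | succ n ih =>
    rcases h with h | h
    · exact ih h
    · show p ∈ Ks S B C p.1
      rw [h.1]; exact Or.inr h

theorem kept_mem_S {p : ℕ × ι} (h : p ∈ kept S B C) : p ∈ S := (mem_Ks_time h).2

theorem kept_disj {p q : ℕ × ι} (hp : p ∈ kept S B C) (hq : q ∈ kept S B C)
    (h : p.1 < q.1) : B q ∩ C p = ∅ := by
  have hq' : q ∈ Ks S B C q.1 := hq
  obtain ⟨n, hn⟩ : ∃ n, q.1 = n + 1 := ⟨q.1 - 1, by omega⟩
  rw [hn] at hq'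
  rcases hq' with h' | h'
  · exact absurd (mem_Ks_time h').1 (by omega)
  · exact h'.2.2 p (Ks_mono (by omega : p.1 ≤ n) hp)

theorem kept_cover {p : ℕ × ι} (hp : p ∈ S) :
    p ∈ kept S B C ∨ ∃ q ∈ kept S B C, q.1 < p.1 ∧ (B p ∩ C q).Nonempty := by
  by_cases h : p ∈ kept S B C
  · exact Or.inl h
  · right
    have h' : p ∉ Ks S B C p.1 := h
    cases hn : p.1 with
    | zero => exact absurd (show p ∈ Ks S B C p.1 by rw [hn]; exact ⟨hn, hp⟩) h'
    | succ n =>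
      rw [hn] at h'
      have h2 : p ∉ {q : ℕ × ι | q.1 = n + 1 ∧ q ∈ S ∧ ∀ r ∈ Ks S B C n, B q ∩ C r = ∅} :=
        fun hh => h' (Or.inr hh)
      simp only [Set.mem_setOf_eq, not_and] at h2
      obtain ⟨q, hq2⟩ := not_forall.mp (h2 hn hp)
      rw [Classical.not_imp] at hq2
      refine ⟨q, mem_Ks_self hq2.1, ?_, Set.nonempty_iff_ne_empty.mpr hq2.2⟩
      have := (mem_Ks_time hq2.1).1; omega

end Selection
-- ### Product-level machinery

namespace MWT

open IntervalPartition

variable {d : ℕ}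

def nrm (s : Fin d → ℤ) : ℕ := ∑ δ, (s δ).natAbs

def convSet (P : Fin d → IntervalPartition) (i j : Fin d → ℕ) : Set (Fin d → ℝ) :=
  Set.univ.pi fun δ => Set.Ico ((P δ).pt (min (i δ) (j δ))) ((P δ).pt (max (i δ) (j δ) + 1))

def aOf (s : Fin d → ℤ) (b : Fin d → ℕ) : Fin d → ℕ := fun δ => ((b δ : ℤ) + s δ).toNat

/-- The stopping family for displacement `s` and thresholds built from `ρ, lam, S, r`. -/
def Sset (F : ℕ → Fin d → IntervalPartition) (ρ lam S r : ℝ) (f : (Fin d → ℝ) → ℝ)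
    (s : Fin d → ℤ) : Set (ℕ × (Fin d → ℕ)) :=
  {p | (∀ δ, p.2 δ < (F p.1 δ).m) ∧ (∀ δ, 0 ≤ (p.2 δ : ℤ) + s δ) ∧
    (∀ δ, aOf s p.2 δ < (F p.1 δ).m) ∧
    r ^ nrm s / S * lam * convVol (F p.1) (aOf s p.2) p.2 <
      ρ ^ nrm s * ∫ y in prodAtomN (F p.1) (aOf s p.2), |f y|}

def Bset (F : ℕ → Fin d → IntervalPartition) : ℕ × (Fin d → ℕ) → Set (Fin d → ℝ) :=
  fun p => prodAtomN (F p.1) p.2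

def Cset (F : ℕ → Fin d → IntervalPartition) (s : Fin d → ℤ) :
    ℕ × (Fin d → ℕ) → Set (Fin d → ℝ) :=
  fun p => convSet (F p.1) (aOf s p.2) p.2

def Aset (F : ℕ → Fin d → IntervalPartition) (s : Fin d → ℤ) :
    ℕ × (Fin d → ℕ) → Set (Fin d → ℝ) :=
  fun p => prodAtomN (F p.1) (aOf s p.2)

theorem aOf_cast {s : Fin d → ℤ} {b : Fin d → ℕ} {δ : Fin d} (h : 0 ≤ (b δ : ℤ) + s δ) :
    (aOf s b δ : ℤ) = (b δ : ℤ) + s δ := Int.toNat_of_nonneg h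

variable {F : ℕ → Fin d → IntervalPartition}

/-- refinement along the filtration. -/
theorem F_refines (hF : ∀ n δ, (F n δ).Refines (F (n + 1) δ)) {m n : ℕ} (h : m ≤ n)
    (δ : Fin d) : (F m δ).Refines (F n δ) := by
  induction n with
  | zero =>
    have : m = 0 := by omega
    subst this; exact Refines.refl _
  | succ n ih =>
    rcases Nat.lt_or_ge m (n + 1) with h' | h'
    · exact (ih (by omega)).trans (hF n δ)
    · have : m = n + 1 := by omega
      subst this; exact Refines.refl _

theorem Bset_subset_Cset (s : Fin d → ℤ) (p : ℕ × (Fin d → ℕ)) :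
    Bset F p ⊆ Cset F s p := by
  refine Set.pi_mono fun δ _ => ?_
  exact atom_subset_conv (F p.1 δ) (aOf s p.2 δ) (p.2 δ)

/-- If a later `B`-atom meets an earlier `conv`, it is contained in it. -/
theorem Bset_subset_of_inter (hF : ∀ n δ, (F n δ).Refines (F (n + 1) δ))
    {ρ lam S r : ℝ} {f : (Fin d → ℝ) → ℝ} {s : Fin d → ℤ} {p q : ℕ × (Fin d → ℕ)}
    (hp : p ∈ Sset F ρ lam S r f s) (hq : q ∈ Sset F ρ lam S r f s)
    (hlt : q.1 ≤ p.1) (hne : (Bset F p ∩ Cset F s q).Nonempty) :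
    Bset F p ⊆ Cset F s q := by
  obtain ⟨x, hx1, hx2⟩ := hne
  refine Set.pi_mono fun δ _ => ?_
  have href := F_refines hF hlt δ
  apply atom_subset_of_inter href (hp.1 δ)
  · have h1 := hq.2.2.1 δ; have h2 := hq.1 δ
    exact le_trans (Nat.min_le_right _ _) (by omega)
  · have h1 := hq.2.2.1 δ; have h2 := hq.1 δ; omega
  · exact ⟨x δ, hx1 δ (Set.mem_univ δ), hx2 δ (Set.mem_univ δ)⟩

/-- Same-time distinct kept pairs have disjoint `A`-atoms. -/
theorem Aset_disj_same (hρ :True) {ρ lam S r : ℝ} {f : (Fin d → ℝ) → ℝ} {s : Fin d → ℤ}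
    {p q : ℕ × (Fin d → ℕ)}
    (hp : p ∈ Sset F ρ lam S r f s) (hq : q ∈ Sset F ρ lam S r f s)
    (heq : p.1 = q.1) (hne : p ≠ q) :
    Aset F s p ∩ Aset F s q = ∅ := by
  have hb : p.2 ≠ q.2 := by
    intro h; exact hne (Prod.ext heq h)
  obtain ⟨δ, hδ⟩ := Function.ne_iff.mp hb
  have ha : aOf s p.2 δ ≠ aOf s q.2 δ := by
    intro h
    apply hδ
    have h1 := aOf_cast (hp.2.1 δ)
    have h2 := aOf_cast (hq.2.1 δ)
    rw [h] at h1
    omega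
  ext y
  simp only [Set.mem_inter_iff, Set.mem_empty_iff_false, iff_false, not_and]
  intro hyp hyq
  have h1 := hyp δ (Set.mem_univ δ)
  have h2 := hyq δ (Set.mem_univ δ)
  rw [heq] at h1
  exact ha (atom_unique (F q.1 δ) (heq ▸ hp.2.2.1 δ) (hq.2.2.1 δ) h1 h2)

/-- Different-time kept pairs have disjoint `A`-atoms: the core geometric argument. -/
theorem Aset_disj_lt (hF : ∀ n δ, (F n δ).Refines (F (n + 1) δ))
    {ρ lam S r : ℝ} {f : (Fin d → ℝ) → ℝ} {s : Fin d → ℤ} {p q : ℕ × (Fin d → ℕ)}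
    (hp : p ∈ Sset F ρ lam S r f s) (hq : q ∈ Sset F ρ lam S r f s)
    (hlt : p.1 < q.1) (hdisj : Bset F q ∩ Cset F s p = ∅) :
    Aset F s p ∩ Aset F s q = ∅ := by
  by_contra hcon
  obtain ⟨y, hyp, hyq⟩ := Set.nonempty_iff_ne_empty.mpr hcon
  have hco : ∀ δ : Fin d,
      ((F q.1 δ).atomN (q.2 δ) ∩
        Set.Ico ((F p.1 δ).pt (min (aOf s p.2 δ) (p.2 δ)))
          ((F p.1 δ).pt (max (aOf s p.2 δ) (p.2 δ) + 1))).Nonempty := by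
    intro δ
    refine core1D (F_refines hF (le_of_lt hlt) δ)
      (hp.2.2.1 δ) (hp.1 δ) (hq.2.2.1 δ) (hq.1 δ) ?_
      (hyp δ (Set.mem_univ δ)) (hyq δ (Set.mem_univ δ))
    rw [aOf_cast (hp.2.1 δ), aOf_cast (hq.2.1 δ)]
    ring
  have : (Bset F q ∩ Cset F s p).Nonempty := by
    refine ⟨fun δ => (hco δ).choose, fun δ _ => ((hco δ).choose_spec).1,
      fun δ _ => ((hco δ).choose_spec).2⟩
  rw [hdisj] at this
  exact Set.not_nonempty_empty this

end MWT
namespace MWT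

open IntervalPartition

variable {d : ℕ}

theorem summable_nrm : ∀ (d : ℕ) {u : ℝ}, 0 ≤ u → u < 1 →
    Summable (fun s : Fin d → ℤ => u ^ nrm s) := by
  intro d
  induction d with
  | zero =>
    intro u h0 h1
    exact summable_of_finite_support (Set.toFinite _)
  | succ d ih =>
    intro u h0 h1
    have h1d : Summable (fun t : ℤ => u ^ t.natAbs) := by
      apply Summable.of_nat_of_neg
      · simpa using summable_geometric_of_lt_one h0 h1
      · simpa using summable_geometric_of_lt_one h0 h1
    have hprod : Summable (fun p : ℤ × (Fin d → ℤ) => u ^ p.1.natAbs * u ^ nrm p.2) :=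
      Summable.mul_of_nonneg (f := fun t : ℤ => u ^ t.natAbs)
        (g := fun s : Fin d → ℤ => u ^ nrm s) h1d (ih h0 h1)
        (Pi.le_def.mpr fun t => pow_nonneg h0 _) (Pi.le_def.mpr fun t => pow_nonneg h0 _)
    set e := Fin.consEquiv (fun _ : Fin (d + 1) => ℤ) with he
    rw [← Equiv.summable_iff e]
    apply hprod.congr
    intro p
    have hcons : e p = Fin.cons p.1 p.2 := rfl
    have hnrm : nrm (e p) = p.1.natAbs + nrm p.2 := by
      simp [hcons, nrm, Fin.sum_univ_succ]
    show u ^ p.1.natAbs * u ^ nrm p.2 = u ^ nrm (e p)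
    rw [hnrm, pow_add]

theorem nrm_zero : nrm (fun _ : Fin d => (0 : ℤ)) = 0 := by simp [nrm]

theorem one_le_tsum_nrm {u : ℝ} (h0 : 0 ≤ u) (h1 : u < 1) :
    1 ≤ ∑' s : Fin d → ℤ, u ^ nrm s := by
  have := Summable.le_tsum (summable_nrm d h0 h1) (fun _ => (0 : ℤ))
    (fun _ _ => pow_nonneg h0 _)
  rwa [nrm_zero, pow_zero] at this

theorem convVol_factor_nonneg (P : Fin d → IntervalPartition) (i j : Fin d → ℕ) (δ : Fin d) :
    0 ≤ (P δ).pt (max (i δ) (j δ) + 1) - (P δ).pt (min (i δ) (j δ)) := by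
  have := (P δ).pt_mono (show min (i δ) (j δ) ≤ max (i δ) (j δ) + 1 by omega)
  linarith

theorem convVol_nonneg (P : Fin d → IntervalPartition) (i j : Fin d → ℕ) :
    0 ≤ convVol P i j :=
  Finset.prod_nonneg fun δ _ => convVol_factor_nonneg P i j δ

theorem convVol_pos (P : Fin d → IntervalPartition) {i j : Fin d → ℕ}
    (hi : ∀ δ, i δ < (P δ).m) (hj : ∀ δ, j δ < (P δ).m) : 0 < convVol P i j := by
  apply Finset.prod_pos
  intro δ _
  have h := (P δ).pt_lt_pt (show min (i δ) (j δ) < max (i δ) (j δ) + 1 by omega)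
    (by have := hi δ; have := hj δ; omega)
  linarith

theorem volume_convSet (P : Fin d → IntervalPartition) (i j : Fin d → ℕ) :
    volume (convSet P i j) = ENNReal.ofReal (convVol P i j) := by
  rw [convSet, volume_pi_pi]
  rw [convVol, ENNReal.ofReal_prod_of_nonneg (fun δ _ => convVol_factor_nonneg P i j δ)]
  exact Finset.prod_congr rfl fun δ _ => Real.volume_Ico

theorem prodAtomN_measurable (P : Fin d → IntervalPartition) (b : Fin d → ℕ) :
    MeasurableSet (prodAtomN P b) :=
  MeasurableSet.univ_pi fun δ => measurableSet_Ico

theorem prodAtomN_subset_rect (P : Fin d → IntervalPartition) {b : Fin d → ℕ}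
    (hb : ∀ δ, b δ < (P δ).m) : prodAtomN P b ⊆ rect P :=
  Set.pi_mono fun δ _ => (P δ).atom_subset_interval (hb δ)

theorem rect_eq {F : ℕ → Fin d → IntervalPartition}
    (hF : ∀ n δ, (F n δ).Refines (F (n + 1) δ)) (n : ℕ) : rect (F n) = rect (F 0) := by
  unfold rect
  refine Set.pi_congr rfl fun δ _ => ?_
  exact ((F_refines hF (Nat.zero_le n) δ).interval_eq).symm

/-- Pigeonhole: if the kernel sum exceeds `lam`, one summand exceeds its share. -/
theorem exists_bad {P : Fin d → IntervalPartition} {ρ lam S r : ℝ}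
    {f : (Fin d → ℝ) → ℝ} {ix : Fin d → ℕ}
    (hS : 0 < S) (hr0 : 0 ≤ r) (hr1 : r < 1)
    (hSval : (∑' s : Fin d → ℤ, r ^ nrm s) ≤ S)
    (hlam : 0 ≤ lam)
    (hix : ∀ δ, ix δ < (P δ).m)
    (hkern : lam < kern P ρ f ix) :
    ∃ ia : ∀ δ, Fin ((P δ).m),
      r ^ dist1 (fun δ => (ia δ : ℕ)) ix / S * lam * convVol P (fun δ => (ia δ : ℕ)) ix <
        ρ ^ dist1 (fun δ => (ia δ : ℕ)) ix * ∫ y in prodAtomN P (fun δ => (ia δ : ℕ)), |f y| := by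
  by_contra hcon
  push_neg at hcon
  apply absurd hkern
  push_neg
  rw [kern]
  have hterm : ∀ ia : ∀ δ, Fin ((P δ).m),
      ρ ^ dist1 (fun δ => (ia δ : ℕ)) ix / convVol P (fun δ => (ia δ : ℕ)) ix *
        ∫ y in prodAtomN P (fun δ => (ia δ : ℕ)), |f y| ≤
      r ^ dist1 (fun δ => (ia δ : ℕ)) ix / S * lam := by
    intro ia
    have hcv : 0 < convVol P (fun δ => (ia δ : ℕ)) ix :=
      convVol_pos P (fun δ => (ia δ).isLt) hix
    rw [div_mul_eq_mul_div, div_le_iff₀ hcv]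
    calc ρ ^ dist1 (fun δ => (ia δ : ℕ)) ix * ∫ y in prodAtomN P (fun δ => (ia δ : ℕ)), |f y|
        ≤ r ^ dist1 (fun δ => (ia δ : ℕ)) ix / S * lam * convVol P (fun δ => (ia δ : ℕ)) ix :=
          hcon ia
      _ = r ^ dist1 (fun δ => (ia δ : ℕ)) ix / S * lam * convVol P (fun δ => (ia δ : ℕ)) ix := rfl
  calc (∑ ia : ∀ δ, Fin ((P δ).m),
        ρ ^ dist1 (fun δ => (ia δ : ℕ)) ix / convVol P (fun δ => (ia δ : ℕ)) ix *
          ∫ y in prodAtomN P (fun δ => (ia δ : ℕ)), |f y|)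
      ≤ ∑ ia : ∀ δ, Fin ((P δ).m), r ^ dist1 (fun δ => (ia δ : ℕ)) ix / S * lam :=
        Finset.sum_le_sum fun ia _ => hterm ia
    _ = (∑ ia : ∀ δ, Fin ((P δ).m), r ^ dist1 (fun δ => (ia δ : ℕ)) ix) * (lam / S) := by
        rw [Finset.sum_mul]
        exact Finset.sum_congr rfl fun ia _ => by ring
    _ ≤ S * (lam / S) := by
        apply mul_le_mul_of_nonneg_right _ (div_nonneg hlam (le_of_lt hS))
        -- reindex through the injective map to displacement vectors
        have hinj : ∀ x ∈ (Finset.univ : Finset (∀ δ, Fin ((P δ).m))), ∀ y ∈ Finset.univ,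
            (fun (ia : ∀ δ, Fin ((P δ).m)) (δ : Fin d) => ((ia δ : ℕ) : ℤ) - (ix δ : ℤ)) x =
            (fun ia δ => ((ia δ : ℕ) : ℤ) - (ix δ : ℤ)) y → x = y := by
          intro x _ y _ hxy
          funext δ
          have := congrFun hxy δ
          simp only at this
          have : ((x δ : ℕ) : ℤ) = ((y δ : ℕ) : ℤ) := by omega
          exact Fin.ext (by exact_mod_cast this)
        have hre : (∑ ia : ∀ δ, Fin ((P δ).m), r ^ dist1 (fun δ => (ia δ : ℕ)) ix) =
            ∑ s ∈ Finset.univ.image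
              (fun (ia : ∀ δ, Fin ((P δ).m)) (δ : Fin d) => ((ia δ : ℕ) : ℤ) - (ix δ : ℤ)),
              r ^ nrm s := by
          rw [Finset.sum_image hinj]
          exact Finset.sum_congr rfl fun x _ => by simp [nrm, dist1]
        rw [hre]
        exact le_trans (Summable.sum_le_tsum _ (fun s _ => pow_nonneg hr0 _) (summable_nrm d hr0 hr1))
          hSval
    _ = lam := by field_simp

end MWT

/-- **Weak type (1,1) of the maximal function (Theorem 2.10 / `Passenbrunner2021`).**
For an interval filtration `(𝓕_n)` on a `d`-dimensional rectangle `I` and `ρ ∈ [0,1)`,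
the maximal function
`𝓜f(x) = sup_n Σ_{A atom of 𝓕_n} ρ^{|d_n(A, A_n(x))|₁} / |conv(A, A_n(x))| ∫_A |f|`
is of weak type `(1,1)` with a constant depending only on `d` and `ρ`; the superlevel
set `{𝓜 f > λ}` is expressed as `{x : ∃ n, λ < (n-th kernel sum at x)}`. -/
theorem maximal_weak_type (d : ℕ) (hd : 1 ≤ d) (ρ : ℝ) (hρ0 : 0 ≤ ρ) (hρ1 : ρ < 1) :
    ∃ C : ℝ, 0 < C ∧
      ∀ F : ℕ → Fin d → IntervalPartition,
        (∀ n δ, (F n δ).Refines (F (n + 1) δ)) →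
        ∀ f : (Fin d → ℝ) → ℝ, IntegrableOn f (rect (F 0)) →
        ∀ lam : ℝ, 0 < lam →
          volume {x | x ∈ rect (F 0) ∧
              ∃ n, lam < kern (F n) ρ f (fun δ => (F n δ).idx (x δ))} ≤
            ENNReal.ofReal (C * (∫ y in rect (F 0), |f y|) / lam) := by
  classical
  set r : ℝ := (1 + ρ) / 2 with hrdef
  have hrpos : 0 < r := by rw [hrdef]; linarith
  have hr0 : 0 ≤ r := le_of_lt hrpos
  have hr1 : r < 1 := by rw [hrdef]; linarith
  have hq0 : 0 ≤ ρ / r := div_nonneg hρ0 hr0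
  have hq1 : ρ / r < 1 := (div_lt_one hrpos).mpr (by rw [hrdef]; linarith)
  set Sc : ℝ := ∑' s : Fin d → ℤ, r ^ MWT.nrm s with hScdef
  set Tc : ℝ := ∑' s : Fin d → ℤ, (ρ / r) ^ MWT.nrm s with hTcdef
  have hSc1 : 1 ≤ Sc := MWT.one_le_tsum_nrm hr0 hr1
  have hTc1 : 1 ≤ Tc := MWT.one_le_tsum_nrm hq0 hq1
  have hScpos : 0 < Sc := lt_of_lt_of_le one_pos hSc1
  clear_value r Sc Tc
  refine ⟨Sc * Tc, by nlinarith, ?_⟩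
  intro F hF f hf lam hlam
  set Itot : ℝ := ∫ y in rect (F 0), |f y| with hItot
  have hItot0 : 0 ≤ Itot := MeasureTheory.integral_nonneg fun y => abs_nonneg _
  set K : (Fin d → ℤ) → Set (ℕ × (Fin d → ℕ)) :=
    fun s => kept (MWT.Sset F ρ lam Sc r f s) (MWT.Bset F) (MWT.Cset F s) with hKdef
  -- the superlevel set is covered by the kept conv-sets
  have hincl : {x | x ∈ rect (F 0) ∧
      ∃ n, lam < kern (F n) ρ f (fun δ => (F n δ).idx (x δ))} ⊆
      ⋃ (s : Fin d → ℤ), ⋃ p ∈ K s, MWT.Cset F s p := by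
    rintro x ⟨hx0, n, hkern⟩
    have hxr : x ∈ rect (F n) := by rw [MWT.rect_eq hF n]; exact hx0
    have hxi : ∀ δ, x δ ∈ (F n δ).interval := fun δ => hxr δ (Set.mem_univ δ)
    set ix : Fin d → ℕ := fun δ => (F n δ).idx (x δ) with hixdef
    have hix : ∀ δ, ix δ < (F n δ).m ∧ x δ ∈ (F n δ).atomN (ix δ) :=
      fun δ => (F n δ).idx_spec (hxi δ)
    obtain ⟨ia, hia⟩ := MWT.exists_bad hScpos hr0 hr1 hScdef.ge (le_of_lt hlam)
      (fun δ => (hix δ).1) hkern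
    set s : Fin d → ℤ := fun δ => ((ia δ : ℕ) : ℤ) - (ix δ : ℤ) with hsdef
    have haOf : MWT.aOf s ix = fun δ => (ia δ : ℕ) := by
      funext δ
      simp only [MWT.aOf, hsdef]
      omega
    have hnrm : MWT.nrm s = dist1 (fun δ => ((ia δ : ℕ))) ix := by
      simp [MWT.nrm, dist1, hsdef]
    have hpS : (n, ix) ∈ MWT.Sset F ρ lam Sc r f s := by
      refine ⟨fun δ => (hix δ).1, fun δ => by simp [hsdef], fun δ => ?_, ?_⟩
      · rw [haOf]; exact (ia δ).isLt
      · show r ^ MWT.nrm s / Sc * lam * convVol (F n) (MWT.aOf s ix) ix <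
          ρ ^ MWT.nrm s * ∫ y in prodAtomN (F n) (MWT.aOf s ix), |f y|
        rw [haOf, hnrm]
        exact hia
    have hxB : x ∈ MWT.Bset F (n, ix) := fun δ _ => (hix δ).2
    rcases kept_cover (B := MWT.Bset F) (C := MWT.Cset F s) hpS with hk |
      ⟨q, hqk, hqlt, hqne⟩
    · exact Set.mem_iUnion.mpr ⟨s, Set.mem_biUnion hk (MWT.Bset_subset_Cset s (n, ix) hxB)⟩
    · have hsub := MWT.Bset_subset_of_inter hF hpS (kept_mem_S hqk) (le_of_lt hqlt) hqne
      exact Set.mem_iUnion.mpr ⟨s, Set.mem_biUnion hqk (hsub hxB)⟩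
  -- the per-displacement measure bound
  have hbound : ∀ s : Fin d → ℤ, volume (⋃ p ∈ K s, MWT.Cset F s p) ≤
      ENNReal.ofReal (Sc / lam * (ρ / r) ^ MWT.nrm s * Itot) := by
    intro s
    set D : ℝ := Sc / lam * (ρ / r) ^ MWT.nrm s with hDdef
    have hD0 : 0 ≤ D := by positivity
    have hAmeas : ∀ p : ℕ × (Fin d → ℕ), MeasurableSet (MWT.Aset F s p) :=
      fun p => MWT.prodAtomN_measurable _ _
    have hAsub : ∀ p ∈ MWT.Sset F ρ lam Sc r f s, MWT.Aset F s p ⊆ rect (F 0) := by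
      intro p hp
      refine subset_trans (MWT.prodAtomN_subset_rect _ hp.2.2.1) ?_
      rw [MWT.rect_eq hF p.1]
    have hptwise : ∀ p : K s, volume (MWT.Cset F s (p : ℕ × (Fin d → ℕ))) ≤
        ENNReal.ofReal D * ∫⁻ y in MWT.Aset F s (p : ℕ × (Fin d → ℕ)), ENNReal.ofReal |f y| := by
      rintro ⟨p, hp⟩
      simp only [MWT.Aset]
      have hpS := kept_mem_S hp
      have hineq := hpS.2.2.2
      have hIA : IntegrableOn (fun y => |f y|) (prodAtomN (F p.1) (MWT.aOf s p.2)) volume :=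
        (hf.mono_set (hAsub p hpS)).abs
      have hval : ENNReal.ofReal (∫ y in prodAtomN (F p.1) (MWT.aOf s p.2), |f y|) =
          ∫⁻ y in prodAtomN (F p.1) (MWT.aOf s p.2), ENNReal.ofReal |f y| :=
        MeasureTheory.ofReal_integral_eq_lintegral_ofReal hIA
          (Filter.Eventually.of_forall fun y => abs_nonneg _)
      have hkey : convVol (F p.1) (MWT.aOf s p.2) p.2 ≤
          D * ∫ y in prodAtomN (F p.1) (MWT.aOf s p.2), |f y| := by
        have h3 : (0 : ℝ) < r ^ MWT.nrm s / Sc * lam := by positivity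
        have h4 := (lt_div_iff₀' h3).mpr hineq
        have h5 : (ρ ^ MWT.nrm s * ∫ y in prodAtomN (F p.1) (MWT.aOf s p.2), |f y|) /
            (r ^ MWT.nrm s / Sc * lam) =
            D * ∫ y in prodAtomN (F p.1) (MWT.aOf s p.2), |f y| := by
          rw [hDdef, div_pow]
          have hrn : r ^ MWT.nrm s ≠ 0 := ne_of_gt (pow_pos hrpos _)
          field_simp
        rw [h5] at h4
        exact le_of_lt h4
      calc volume (MWT.Cset F s p) = ENNReal.ofReal (convVol (F p.1) (MWT.aOf s p.2) p.2) :=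
            MWT.volume_convSet _ _ _
        _ ≤ ENNReal.ofReal (D * ∫ y in prodAtomN (F p.1) (MWT.aOf s p.2), |f y|) := ENNReal.ofReal_le_ofReal hkey
        _ = ENNReal.ofReal D * ENNReal.ofReal (∫ y in prodAtomN (F p.1) (MWT.aOf s p.2), |f y|) :=
            ENNReal.ofReal_mul hD0
        _ = ENNReal.ofReal D * ∫⁻ y in prodAtomN (F p.1) (MWT.aOf s p.2), ENNReal.ofReal |f y| := by rw [hval]
    have hpd : Pairwise (Function.onFun Disjoint
        (fun p : K s => MWT.Aset F s (p : ℕ × (Fin d → ℕ)))) := by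
      rintro ⟨p, hp⟩ ⟨q, hq⟩ hne
      have hv : p ≠ q := fun h => hne (Subtype.ext h)
      have hpS := kept_mem_S hp
      have hqS := kept_mem_S hq
      rcases Nat.lt_trichotomy p.1 q.1 with h | h | h
      · exact Set.disjoint_iff_inter_eq_empty.mpr
          (MWT.Aset_disj_lt hF hpS hqS h (kept_disj hp hq h))
      · exact Set.disjoint_iff_inter_eq_empty.mpr
          (MWT.Aset_disj_same trivial hpS hqS h hv)
      · exact (Set.disjoint_iff_inter_eq_empty.mpr
          (MWT.Aset_disj_lt hF hqS hpS h (kept_disj hq hp h))).symm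
    calc volume (⋃ p ∈ K s, MWT.Cset F s p)
        ≤ ∑' p : K s, volume (MWT.Cset F s (p : ℕ × (Fin d → ℕ))) :=
          measure_biUnion_le volume (Set.to_countable _) _
      _ ≤ ∑' p : K s, ENNReal.ofReal D *
            ∫⁻ y in MWT.Aset F s (p : ℕ × (Fin d → ℕ)), ENNReal.ofReal |f y| :=
          ENNReal.tsum_le_tsum hptwise
      _ = ENNReal.ofReal D *
            ∑' p : K s, ∫⁻ y in MWT.Aset F s (p : ℕ × (Fin d → ℕ)), ENNReal.ofReal |f y| :=
          ENNReal.tsum_mul_left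
      _ = ENNReal.ofReal D *
            ∫⁻ y in ⋃ p : K s, MWT.Aset F s (p : ℕ × (Fin d → ℕ)), ENNReal.ofReal |f y| := by
          rw [MeasureTheory.lintegral_iUnion (fun p => hAmeas _) hpd]
      _ ≤ ENNReal.ofReal D * ∫⁻ y in rect (F 0), ENNReal.ofReal |f y| := by
          refine mul_le_mul_right (lintegral_mono_set ?_) _
          exact Set.iUnion_subset fun p => hAsub _ (kept_mem_S p.2)
      _ = ENNReal.ofReal D * ENNReal.ofReal Itot := by
          rw [hItot, MeasureTheory.ofReal_integral_eq_lintegral_ofReal hf.abs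
            (Filter.Eventually.of_forall fun y => abs_nonneg _)]
      _ = ENNReal.ofReal (D * Itot) := (ENNReal.ofReal_mul hD0).symm
  -- combine over all displacements
  have hsum : Summable (fun s : Fin d → ℤ => Sc / lam * (ρ / r) ^ MWT.nrm s * Itot) := by
    have := (MWT.summable_nrm d hq0 hq1).mul_left (Sc / lam)
    exact this.mul_right Itot
  calc volume {x | x ∈ rect (F 0) ∧
        ∃ n, lam < kern (F n) ρ f (fun δ => (F n δ).idx (x δ))}
      ≤ volume (⋃ (s : Fin d → ℤ), ⋃ p ∈ K s, MWT.Cset F s p) := measure_mono hincl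
    _ ≤ ∑' s : Fin d → ℤ, volume (⋃ p ∈ K s, MWT.Cset F s p) := measure_iUnion_le _
    _ ≤ ∑' s : Fin d → ℤ, ENNReal.ofReal (Sc / lam * (ρ / r) ^ MWT.nrm s * Itot) :=
        ENNReal.tsum_le_tsum hbound
    _ = ENNReal.ofReal (∑' s : Fin d → ℤ, Sc / lam * (ρ / r) ^ MWT.nrm s * Itot) :=
        (ENNReal.ofReal_tsum_of_nonneg (fun s => by positivity) hsum).symm
    _ = ENNReal.ofReal (Sc * Tc * Itot / lam) := by
        congr 1
        have : (fun s : Fin d → ℤ => Sc / lam * (ρ / r) ^ MWT.nrm s * Itot) =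
            fun s : Fin d → ℤ => (Sc / lam * Itot) * (ρ / r) ^ MWT.nrm s := by
          funext s; ring
        rw [this, tsum_mul_left, ← hTcdef]
        field_simp
end
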